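/- arXiv:2011.09889 — 3 statements merged into one kernel-verified Lean document; each statement's English description precedes it below -/
import Mathlib

section
/- If y : (0,∞) → ℝ is twice differentiable, satisfies y''(x) = y(x)^{3/2}/sqrt(x), y > 0, and extends continuously to [0,∞) with y(0) = 1, y'(0) = -B for some B, and y(x) → 0, y'(x) → 0 as x → ∞, with (y')^2 and y^{5/2}/sqrt(x) integrable on (0,∞), then B = ∫₀^∞ [ (y'(x))^2 + y(x)^{5/2}/sqrt(x) ] dx. -/
open Real MeasureTheory Set Filter

theorem thomas_fermi_energy_sum_rule
    (y y' : ℝ → ℝ) (B : ℝ)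
    (hy' : ∀ x ∈ Ioi (0 : ℝ), HasDerivAt y (y' x) x)
    (hy'' : ∀ x ∈ Ioi (0 : ℝ),
      HasDerivAt y' (y x ^ ((3 : ℝ) / 2) / Real.sqrt x) x)
    (hpos : ∀ x ∈ Ioi (0 : ℝ), 0 < y x)
    (hy0 : Tendsto y (nhdsWithin 0 (Ioi 0)) (nhds 1))
    (hy'0 : Tendsto y' (nhdsWithin 0 (Ioi 0)) (nhds (-B)))
    (hytop : Tendsto y atTop (nhds 0))
    (hy'top : Tendsto y' atTop (nhds 0))
    (hint : IntegrableOn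
      (fun x => (y' x) ^ 2 + y x ^ ((5 : ℝ) / 2) / Real.sqrt x) (Ioi 0)) :
    B = ∫ x in Ioi (0 : ℝ),
      ((y' x) ^ 2 + y x ^ ((5 : ℝ) / 2) / Real.sqrt x) := by
  set G : ℝ → ℝ := fun x => if 0 < x then y x * y' x else -B with hG
  have hGeq : ∀ x ∈ Ioi (0 : ℝ), G x = y x * y' x := by
    intro x hx; simp [hG, mem_Ioi.mp hx]
  -- derivative of G on Ioi 0
  have hGderiv : ∀ x ∈ Ioi (0 : ℝ),
      HasDerivAt G ((y' x) ^ 2 + y x ^ ((5 : ℝ) / 2) / Real.sqrt x) x := by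
    intro x hx
    have hx0 : (0 : ℝ) < x := hx
    have h1 : HasDerivAt (fun t => y t * y' t)
        (y' x * y' x + y x * (y x ^ ((3 : ℝ) / 2) / Real.sqrt x)) x :=
      (hy' x hx).mul (hy'' x hx)
    have heq : y' x * y' x + y x * (y x ^ ((3 : ℝ) / 2) / Real.sqrt x)
        = (y' x) ^ 2 + y x ^ ((5 : ℝ) / 2) / Real.sqrt x := by
      have hyx : 0 < y x := hpos x hx
      have h2 : y x * y x ^ ((3 : ℝ) / 2) = y x ^ ((5 : ℝ) / 2) := by
        nth_rewrite 1 [← Real.rpow_one (y x)]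
        rw [← Real.rpow_add hyx]
        norm_num
      rw [sq, ← mul_div_assoc, h2]
    rw [heq] at h1
    apply h1.congr_of_eventuallyEq
    filter_upwards [Ioi_mem_nhds hx0] with t ht
    exact (hGeq t ht)
  -- continuity at 0 from the right
  have hcont : ContinuousWithinAt G (Ici (0 : ℝ)) 0 := by
    rw [← continuousWithinAt_Ioi_iff_Ici]
    have : Tendsto (fun t => y t * y' t) (nhdsWithin 0 (Ioi 0)) (nhds (1 * (-B))) :=
      hy0.mul hy'0
    have hGt : Tendsto G (nhdsWithin 0 (Ioi 0)) (nhds (1 * (-B))) := by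
      apply this.congr'
      filter_upwards [self_mem_nhdsWithin] with t ht
      exact (hGeq t ht).symm
    have hG0 : G 0 = -B := by simp [hG]
    unfold ContinuousWithinAt
    rw [hG0]
    simpa using hGt
  -- limit at infinity
  have htop : Tendsto G atTop (nhds 0) := by
    have : Tendsto (fun t => y t * y' t) atTop (nhds (0 * 0)) := hytop.mul hy'top
    rw [zero_mul] at this
    apply this.congr'
    filter_upwards [Ioi_mem_atTop (0:ℝ)] with t ht
    exact (hGeq t ht).symm
  have key := MeasureTheory.integral_Ioi_of_hasDerivAt_of_tendsto hcont hGderiv hint htop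
  have hG0 : G 0 = -B := by simp [hG]
  rw [hG0] at key
  rw [key]; ring
end

section
/- If y : (0,∞) → ℝ is twice differentiable, satisfies y''(x) = y(x)^{3/2}/sqrt(x), y(0) = 1, y(∞) = 0, and x·y'(x) → 0 as x → ∞ and as x → 0⁺, with √x·y^{3/2} integrable, then ∫₀^∞ sqrt(x)·y(x)^{3/2} dx = 1. -/
open Real MeasureTheory Set Filter

theorem thomas_fermi_sum_rule_one
    (y y' : ℝ → ℝ)
    (hy' : ∀ x ∈ Ioi (0 : ℝ), HasDerivAt y (y' x) x)
    (hy'' : ∀ x ∈ Ioi (0 : ℝ),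
      HasDerivAt y' (y x ^ ((3 : ℝ) / 2) / Real.sqrt x) x)
    (hy0 : Tendsto y (nhdsWithin 0 (Ioi 0)) (nhds 1))
    (hytop : Tendsto y atTop (nhds 0))
    (hxy'top : Tendsto (fun x => x * y' x) atTop (nhds 0))
    (hxy'0 : Tendsto (fun x => x * y' x) (nhdsWithin 0 (Ioi 0)) (nhds 0))
    (hint : IntegrableOn (fun x => Real.sqrt x * y x ^ ((3 : ℝ) / 2)) (Ioi 0)) :
    ∫ x in Ioi (0 : ℝ), Real.sqrt x * y x ^ ((3 : ℝ) / 2) = 1 := by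
  set G : ℝ → ℝ := fun x => if 0 < x then x * y' x - y x else -1 with hG
  have hGeq : ∀ x ∈ Ioi (0:ℝ), G x = x * y' x - y x := by
    intro x hx; simp [hG, hx.out]
  have hcont : ContinuousWithinAt G (Ici 0) 0 := by
    have h1 : Tendsto G (nhdsWithin 0 (Ioi 0)) (nhds (-1)) := by
      have : Tendsto (fun x => x * y' x - y x) (nhdsWithin 0 (Ioi 0)) (nhds (0 - 1)) :=
        hxy'0.sub hy0
      rw [zero_sub] at this
      exact this.congr' (by filter_upwards [self_mem_nhdsWithin] with x hx; exact (hGeq x hx).symm)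
    have : ContinuousWithinAt G (Ioi 0) 0 := by
      simpa [ContinuousWithinAt, hG] using h1
    simpa [hG, ← continuousWithinAt_Ioi_iff_Ici] using this
  have hderiv : ∀ x ∈ Ioi (0:ℝ), HasDerivAt G (Real.sqrt x * y x ^ ((3:ℝ)/2)) x := by
    intro x hx
    have hx0 : (0:ℝ) < x := hx
    have hd : HasDerivAt (fun x => x * y' x - y x)
        (1 * y' x + x * (y x ^ ((3:ℝ)/2) / Real.sqrt x) - y' x) x :=
      ((hasDerivAt_id x).mul (hy'' x hx)).sub (hy' x hx)
    have heq : 1 * y' x + x * (y x ^ ((3:ℝ)/2) / Real.sqrt x) - y' x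
        = Real.sqrt x * y x ^ ((3:ℝ)/2) := by
      have hds : x / Real.sqrt x = Real.sqrt x := Real.div_sqrt
      rw [one_mul, add_sub_cancel_left, mul_div_assoc', mul_comm x, mul_div_assoc, hds,
        mul_comm]
    rw [heq] at hd
    exact hd.congr_of_eventuallyEq
      (by filter_upwards [Ioi_mem_nhds hx0] with z hz; exact hGeq z hz)
  have htop : Tendsto G atTop (nhds 0) := by
    have : Tendsto (fun x => x * y' x - y x) atTop (nhds (0 - 0)) := hxy'top.sub hytop
    rw [sub_zero] at this
    exact this.congr' (by filter_upwards [Ioi_mem_atTop 0] with x hx; exact (hGeq x hx).symm)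
  have := integral_Ioi_of_hasDerivAt_of_tendsto hcont hderiv hint htop
  simpa [hG] using this
end

section
/- If y satisfies the Thomas-Fermi equation y'' = y^{3/2}/√x on (0,∞) with y(0) = 1, y(∞) = 0, x·y'(x) → 0 as x → ∞, x²·y'(x) → 0 and x·y(x) → 0 as x → 0⁺ appropriately, and all integrals below converge, then ∫₀^∞ y(x) dx = (1/2) ∫₀^∞ x^{3/2} y(x)^{3/2} dx. -/
open Real MeasureTheory Set Filter

lemma rpow_32_nonneg (a : ℝ) : 0 ≤ a ^ ((3:ℝ)/2) := by
  rcases le_or_gt 0 a with h | h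
  · exact Real.rpow_nonneg h _
  · rw [Real.rpow_def_of_neg h]
    have : Real.cos ((3:ℝ)/2 * π) = 0 := by
      rw [show (3:ℝ)/2 * π = π/2 + π by ring, Real.cos_add_pi, Real.cos_pi_div_two, neg_zero]
    rw [this, mul_zero]

theorem thomas_fermi_integral_relation
    (y y' : ℝ → ℝ)
    (hy' : ∀ x ∈ Ioi (0 : ℝ), HasDerivAt y (y' x) x)
    (hy'' : ∀ x ∈ Ioi (0 : ℝ),
      HasDerivAt y' (y x ^ ((3 : ℝ) / 2) / Real.sqrt x) x)
    (hy0 : Tendsto y (nhdsWithin 0 (Ioi 0)) (nhds 1))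
    (hytop : Tendsto y atTop (nhds 0))
    (hxy'top : Tendsto (fun x => x * y' x) atTop (nhds 0))
    (hx2y'0 : Tendsto (fun x => x ^ 2 * y' x) (nhdsWithin 0 (Ioi 0)) (nhds 0))
    (hxy0 : Tendsto (fun x => x * y x) (nhdsWithin 0 (Ioi 0)) (nhds 0))
    (hint1 : IntegrableOn y (Ioi 0))
    (hint2 : IntegrableOn
      (fun x => x ^ ((3 : ℝ) / 2) * y x ^ ((3 : ℝ) / 2)) (Ioi 0)) :
    ∫ x in Ioi (0 : ℝ), y x =
      (1 / 2) * ∫ x in Ioi (0 : ℝ), x ^ ((3 : ℝ) / 2) * y x ^ ((3 : ℝ) / 2) := by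
  -- continuity of y and y' on (0,∞)
  have hycont : ∀ x ∈ Ioi (0:ℝ), ContinuousAt y x := fun x hx => (hy' x hx).continuousAt
  have hy'cont : ∀ x ∈ Ioi (0:ℝ), ContinuousAt y' x := fun x hx => (hy'' x hx).continuousAt
  -- FTC on compact subintervals
  have hyii : ∀ a b : ℝ, 0 < a → a ≤ b → IntervalIntegrable y' volume a b := by
    intro a b ha hab
    apply ContinuousOn.intervalIntegrable
    intro t ht
    rw [uIcc_of_le hab] at ht
    exact (hy'cont t (lt_of_lt_of_le ha ht.1)).continuousWithinAt
  have ftc1 : ∀ a b : ℝ, 0 < a → a ≤ b → ∫ t in a..b, y' t = y b - y a := by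
    intro a b ha hab
    apply intervalIntegral.integral_eq_sub_of_hasDerivAt
    · intro t ht
      rw [uIcc_of_le hab] at ht
      exact hy' t (lt_of_lt_of_le ha ht.1)
    · exact hyii a b ha hab
  have ftc2 : ∀ a b : ℝ, 0 < a → a ≤ b →
      ∫ t in a..b, y t ^ ((3:ℝ)/2) / Real.sqrt t = y' b - y' a := by
    intro a b ha hab
    apply intervalIntegral.integral_eq_sub_of_hasDerivAt
    · intro t ht
      rw [uIcc_of_le hab] at ht
      exact hy'' t (lt_of_lt_of_le ha ht.1)
    · apply ContinuousOn.intervalIntegrable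
      intro t ht
      rw [uIcc_of_le hab] at ht
      have ht0 : 0 < t := lt_of_lt_of_le ha ht.1
      apply ContinuousWithinAt.div
      · exact ((Real.continuousAt_rpow_const _ _ (Or.inr (by norm_num))).comp
          (hycont t ht0)).continuousWithinAt
      · exact (Real.continuous_sqrt.continuousAt).continuousWithinAt
      · simp [Real.sqrt_eq_zero', not_le, ht0, ne_of_gt (Real.sqrt_pos.mpr ht0)]
  -- y' is monotone on (0,∞)
  have hmono : ∀ a b : ℝ, 0 < a → a ≤ b → y' a ≤ y' b := by
    intro a b ha hab
    have h := ftc2 a b ha hab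
    have h2 : 0 ≤ ∫ t in a..b, y t ^ ((3:ℝ)/2) / Real.sqrt t := by
      apply intervalIntegral.integral_nonneg hab
      intro u hu
      exact div_nonneg (rpow_32_nonneg _) (Real.sqrt_nonneg _)
    linarith [h ▸ h2]
  -- y' ≤ 0 on (0,∞)
  have hy'nonpos : ∀ x ∈ Ioi (0:ℝ), y' x ≤ 0 := by
    intro a ha
    by_contra h
    push_neg at h
    have hgrow : ∀ b, a ≤ b → y a + (b - a) * y' a ≤ y b := by
      intro b hab
      have := ftc1 a b ha hab
      have hge : ∫ t in a..b, y' a ≤ ∫ t in a..b, y' t := by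
        apply intervalIntegral.integral_mono_on hab (intervalIntegrable_const) (hyii a b ha hab)
        intro t ht
        exact hmono a t ha ht.1
      rw [intervalIntegral.integral_const, smul_eq_mul] at hge
      linarith
    have hlin : Tendsto (fun b => y a + (b - a) * y' a) atTop atTop := by
      apply Filter.tendsto_atTop_add_const_left
      exact (tendsto_atTop_add_const_right _ _ tendsto_id).atTop_mul_const h
    have : Tendsto y atTop atTop :=
      tendsto_atTop_mono' _ (eventually_atTop.2 ⟨a, hgrow⟩) hlin
    exact not_tendsto_atTop_of_tendsto_nhds hytop this
  -- y is antitone on (0,∞)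
  have hanti : ∀ a b : ℝ, 0 < a → a ≤ b → y b ≤ y a := by
    intro a b ha hab
    have h := ftc1 a b ha hab
    have h2 : ∫ t in a..b, y' t ≤ ∫ _t in a..b, (0:ℝ) := by
      apply intervalIntegral.integral_mono_on hab (hyii a b ha hab) intervalIntegrable_const
      intro u hu
      exact hy'nonpos u (lt_of_lt_of_le ha hu.1)
    simp only [intervalIntegral.integral_const, smul_eq_mul, mul_zero] at h2
    linarith [h ▸ h2]
  -- y ≥ 0 on (0,∞)
  have hynn : ∀ x ∈ Ioi (0:ℝ), 0 ≤ y x := by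
    intro x hx
    refine le_of_tendsto hytop ?_
    filter_upwards [eventually_ge_atTop x] with b hb
    exact hanti x b hx hb
  -- interval integrability of y on positive intervals
  have hyint : ∀ a b : ℝ, 0 ≤ a → a ≤ b → IntervalIntegrable y volume a b := by
    intro a b ha hab
    constructor
    · apply hint1.mono_set
      intro t ht
      exact lt_of_le_of_lt ha ht.1
    · rw [Set.Ioc_eq_empty (not_lt.mpr hab)]
      exact integrableOn_empty
  -- tail integrals of y
  set F : ℝ → ℝ := fun b => ∫ t in (0:ℝ)..b, y t with hFdef
  have hFtop : Tendsto F atTop (nhds (∫ x in Ioi (0:ℝ), y x)) :=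
    intervalIntegral_tendsto_integral_Ioi 0 hint1 tendsto_id
  have hhalf : Tendsto (fun x : ℝ => x / 2) atTop atTop :=
    tendsto_id.atTop_div_const two_pos
  have hFhalf : Tendsto (fun x => F (x/2)) atTop (nhds (∫ x in Ioi (0:ℝ), y x)) :=
    hFtop.comp hhalf
  have hsplit : ∀ x : ℝ, 0 < x → ∫ t in (x/2)..x, y t = F x - F (x/2) := by
    intro x hx
    have h1 : IntervalIntegrable y volume 0 (x/2) := hyint 0 (x/2) le_rfl (by linarith)
    have h2 : IntervalIntegrable y volume (x/2) x :=
      hyint (x/2) x (by linarith) (by linarith)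
    have h3 := intervalIntegral.integral_add_adjacent_intervals h1 h2
    simp only [hFdef]
    linarith [h3]
  -- x * y x → 0 at ∞
  have hxytop : Tendsto (fun x => x * y x) atTop (nhds 0) := by
    have hub : ∀ᶠ x in atTop, x * y x ≤ 2 * (F x - F (x/2)) := by
      filter_upwards [eventually_gt_atTop (0:ℝ)] with x hx
      have key : (∫ _t in (x/2)..x, y x) ≤ ∫ t in (x/2)..x, y t := by
        apply intervalIntegral.integral_mono_on (by linarith) intervalIntegrable_const
          (hyint (x/2) x (by linarith) (by linarith))
        intro t ht
        exact hanti t x (by linarith [ht.1]) ht.2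
      rw [intervalIntegral.integral_const, smul_eq_mul, hsplit x hx] at key
      linarith
    have hlb : ∀ᶠ x in atTop, (0:ℝ) ≤ x * y x := by
      filter_upwards [eventually_gt_atTop (0:ℝ)] with x hx
      exact mul_nonneg hx.le (hynn x hx)
    have hg0 : Tendsto (fun x => 2 * (F x - F (x/2))) atTop (nhds 0) := by
      have := (hFtop.sub hFhalf).const_mul 2
      simpa using this
    exact tendsto_of_tendsto_of_tendsto_of_le_of_le' tendsto_const_nhds hg0 hlb hub
  -- x^2 * y' x → 0 at ∞
  have hx2y'top : Tendsto (fun x => x^2 * y' x) atTop (nhds 0) := by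
    have hub : ∀ᶠ x in atTop, x^2 * y' x ≤ 0 := by
      filter_upwards [eventually_gt_atTop (0:ℝ)] with x hx
      exact mul_nonpos_of_nonneg_of_nonpos (sq_nonneg x) (hy'nonpos x hx)
    have hlb : ∀ᶠ x in atTop, -4 * ((x/2) * y (x/2)) ≤ x^2 * y' x := by
      filter_upwards [eventually_gt_atTop (0:ℝ)] with x hx
      have key : (∫ t in (x/2)..x, y' t) ≤ ∫ _t in (x/2)..x, y' x := by
        apply intervalIntegral.integral_mono_on (by linarith)
          (hyii (x/2) x (by linarith) (by linarith)) intervalIntegrable_const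
        intro t ht
        exact hmono t x (by linarith [ht.1]) ht.2
      rw [intervalIntegral.integral_const, smul_eq_mul,
        ftc1 (x/2) x (by linarith) (by linarith)] at key
      have h1 : 0 ≤ y x := hynn x hx
      have h2 : -(y (x/2)) ≤ (x - x/2) * y' x := by linarith
      have h3 := mul_le_mul_of_nonneg_left h2 (by linarith : (0:ℝ) ≤ 2*x)
      nlinarith [h3]
    have hlbt : Tendsto (fun x => -4 * ((x/2) * y (x/2))) atTop (nhds 0) := by
      have := (hxytop.comp hhalf).const_mul (-4)
      simpa using this
    exact tendsto_of_tendsto_of_tendsto_of_le_of_le' hlbt tendsto_const_nhds hlb hub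
  -- the function for integration by parts
  set g : ℝ → ℝ := fun x => x^2 * y' x - 2 * (x * y x) with hgdef
  have hgderiv : ∀ x ∈ Ioi (0:ℝ),
      HasDerivAt g (x ^ ((3:ℝ)/2) * y x ^ ((3:ℝ)/2) - 2 * y x) x := by
    intro x hx
    have hx0 : (0:ℝ) < x := hx
    have d1 := (hasDerivAt_pow 2 x).mul (hy'' x hx)
    have d2 : HasDerivAt (fun x => x * y x) (1 * y x + x * y' x) x :=
      (hasDerivAt_id x).mul (hy' x hx)
    have d3 := d1.sub (d2.const_mul 2)
    refine d3.congr_deriv ?_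
    have hs : x ^ ((3:ℝ)/2) = x^2 / Real.sqrt x := by
      rw [Real.sqrt_eq_rpow, show ((3:ℝ)/2) = 2 - 1/2 by norm_num, Real.rpow_sub hx0]
      norm_num [Real.rpow_two]
    rw [hs]
    have hsq : Real.sqrt x ≠ 0 := ne_of_gt (Real.sqrt_pos.mpr hx0)
    field_simp
    ring
  have hgtop : Tendsto g atTop (nhds 0) := by
    have := hx2y'top.sub (hxytop.const_mul 2)
    simpa using this
  have hg0lim : Tendsto g (nhdsWithin 0 (Ioi 0)) (nhds 0) := by
    have := hx2y'0.sub (hxy0.const_mul 2)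
    simpa using this
  have hgcont : ContinuousWithinAt g (Ici (0:ℝ)) 0 := by
    have hgz : g 0 = 0 := by simp [hgdef]
    rw [ContinuousWithinAt, hgz, ← Set.Ioi_insert, nhdsWithin_insert]
    exact tendsto_sup.mpr ⟨by simpa [hgz] using tendsto_pure_nhds g 0, hg0lim⟩
  have hintg : IntegrableOn (fun x => x ^ ((3:ℝ)/2) * y x ^ ((3:ℝ)/2) - 2 * y x) (Ioi 0) :=
    hint2.sub (hint1.const_mul 2)
  have key := integral_Ioi_of_hasDerivAt_of_tendsto hgcont hgderiv hintg hgtop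
  have hgz : g 0 = 0 := by simp [hgdef]
  rw [hgz, sub_zero, integral_sub hint2 (hint1.const_mul 2), MeasureTheory.integral_const_mul 2 y] at key
  linarith [key]
end
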